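/- For d ≥ 2, the ratio of Gamma functions satisfies 2(d+1)^{1/2}/(3^{1/2}π^{1/2}) ≤ Γ(1 + d/2)/Γ((d+1)/2) ≤ (d+1)^{1/2}/2^{1/2}. -/

import Mathlib

open Real

lemma gamma_midpoint_sq (x y : ℝ) (hx : 0 < x) (hy : 0 < y) :
    Real.Gamma ((x + y) / 2) ^ 2 ≤ Real.Gamma x * Real.Gamma y := by
  have h := Real.convexOn_log_Gamma.2 (Set.mem_Ioi.mpr hx) (Set.mem_Ioi.mpr hy)
    (by norm_num : (0:ℝ) ≤ 1/2) (by norm_num : (0:ℝ) ≤ 1/2) (by norm_num)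
  simp only [Function.comp_apply, smul_eq_mul] at h
  have hxy : (1/2 : ℝ) * x + (1/2 : ℝ) * y = (x + y) / 2 := by ring
  rw [hxy] at h
  have hm : 0 < Real.Gamma ((x + y) / 2) := Real.Gamma_pos_of_pos (by linarith)
  have hgx : 0 < Real.Gamma x := Real.Gamma_pos_of_pos hx
  have hgy : 0 < Real.Gamma y := Real.Gamma_pos_of_pos hy
  have h2 : Real.log (Real.Gamma ((x + y) / 2) ^ 2) ≤ Real.log (Real.Gamma x * Real.Gamma y) := by
    rw [Real.log_pow, Real.log_mul hgx.ne' hgy.ne']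
    push_cast
    linarith
  exact (Real.log_le_log_iff (by positivity) (by positivity)).mp h2

lemma upper_bound (x : ℝ) (hx : 0 ≤ x) :
    Real.Gamma (1 + x / 2) / Real.Gamma ((x + 1) / 2) ≤ Real.sqrt (x + 1) / Real.sqrt 2 := by
  have hb : 0 < Real.Gamma ((x + 1) / 2) := Real.Gamma_pos_of_pos (by linarith)
  have ha : 0 < Real.Gamma (1 + x / 2) := Real.Gamma_pos_of_pos (by linarith)
  have hmid := gamma_midpoint_sq ((x+1)/2) ((x+3)/2) (by linarith) (by linarith)
  have hrec : Real.Gamma ((x+3)/2) = ((x+1)/2) * Real.Gamma ((x+1)/2) := by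
    have : (x+3)/2 = (x+1)/2 + 1 := by ring
    rw [this, Real.Gamma_add_one (by positivity)]
  have heq : ((x+1)/2 + (x+3)/2) / 2 = 1 + x / 2 := by ring
  rw [heq, hrec] at hmid
  -- (a/b)^2 ≤ (x+1)/2
  have hq : (Real.Gamma (1 + x / 2) / Real.Gamma ((x + 1) / 2)) ^ 2 ≤ (x + 1) / 2 := by
    rw [div_pow, div_le_iff₀ (by positivity)]
    nlinarith
  rw [← Real.sqrt_div (by linarith : (0:ℝ) ≤ x + 1)]
  exact Real.le_sqrt' (by positivity) |>.mpr hq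

lemma lower_step (x : ℝ) (hx : 0 ≤ x)
    (hQ : 2 * Real.sqrt (x + 1) / (Real.sqrt 3 * Real.sqrt Real.pi) ≤
      Real.Gamma (1 + x / 2) / Real.Gamma ((x + 1) / 2)) :
    2 * Real.sqrt (x + 2 + 1) / (Real.sqrt 3 * Real.sqrt Real.pi) ≤
      Real.Gamma (1 + (x + 2) / 2) / Real.Gamma ((x + 2 + 1) / 2) := by
  have hb : 0 < Real.Gamma ((x + 1) / 2) := Real.Gamma_pos_of_pos (by linarith)
  have hs : (0:ℝ) < Real.sqrt 3 * Real.sqrt Real.pi := by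
    have := Real.pi_pos; positivity
  have hQeq : Real.Gamma (1 + (x + 2) / 2) / Real.Gamma ((x + 2 + 1) / 2)
      = (x + 2) / (x + 1) * (Real.Gamma (1 + x / 2) / Real.Gamma ((x + 1) / 2)) := by
    have e1 : (1 : ℝ) + (x + 2) / 2 = (1 + x / 2) + 1 := by ring
    have e2 : (x + 2 + 1) / 2 = ((x + 1) / 2) + 1 := by ring
    rw [e1, e2, Real.Gamma_add_one (by positivity), Real.Gamma_add_one (by positivity)]
    field_simp
    ring
  -- sqrt inequality: sqrt(x+3)*(x+1) ≤ (x+2)*sqrt(x+1)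
  have h1 : Real.sqrt (x + 3) * (x + 1) ≤ (x + 2) * Real.sqrt (x + 1) := by
    have hc : (x + 3) * (x + 1) ^ 2 ≤ (x + 2) ^ 2 * (x + 1) := by nlinarith
    calc Real.sqrt (x + 3) * (x + 1)
        = Real.sqrt ((x + 3) * (x + 1) ^ 2) := by
          rw [Real.sqrt_mul (by linarith), Real.sqrt_sq (by linarith)]
      _ ≤ Real.sqrt ((x + 2) ^ 2 * (x + 1)) := Real.sqrt_le_sqrt hc
      _ = (x + 2) * Real.sqrt (x + 1) := by
          rw [Real.sqrt_mul (by positivity), Real.sqrt_sq (by linarith)]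
  have h2 : 2 * Real.sqrt (x + 2 + 1) ≤ (x + 2) / (x + 1) * (2 * Real.sqrt (x + 1)) := by
    rw [div_mul_eq_mul_div, le_div_iff₀ (by linarith)]
    have : x + 2 + 1 = x + 3 := by ring
    rw [this]; nlinarith
  calc 2 * Real.sqrt (x + 2 + 1) / (Real.sqrt 3 * Real.sqrt Real.pi)
      ≤ ((x + 2) / (x + 1) * (2 * Real.sqrt (x + 1))) / (Real.sqrt 3 * Real.sqrt Real.pi) := by
        gcongr
    _ = (x + 2) / (x + 1) * (2 * Real.sqrt (x + 1) / (Real.sqrt 3 * Real.sqrt Real.pi)) := by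
        ring
    _ ≤ (x + 2) / (x + 1) * (Real.Gamma (1 + x / 2) / Real.Gamma ((x + 1) / 2)) :=
        mul_le_mul_of_nonneg_left hQ (by positivity)
    _ = _ := hQeq.symm

lemma gamma_three_halves : Real.Gamma (3 / 2) = Real.sqrt Real.pi / 2 := by
  have : (3 / 2 : ℝ) = 1 / 2 + 1 := by norm_num
  rw [this, Real.Gamma_add_one (by norm_num), Real.Gamma_one_half_eq]
  ring

lemma base2 : 2 * Real.sqrt ((2:ℕ) + 1) / (Real.sqrt 3 * Real.sqrt Real.pi) ≤
    Real.Gamma (1 + ((2:ℕ) : ℝ) / 2) / Real.Gamma ((((2:ℕ) : ℝ) + 1) / 2) := by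
  have h1 : (1 : ℝ) + ((2:ℕ) : ℝ) / 2 = 2 := by norm_num
  have h2 : (((2:ℕ) : ℝ) + 1) / 2 = 3 / 2 := by norm_num
  rw [h1, h2, Real.Gamma_two, gamma_three_halves]
  have h3 : ((2:ℕ) : ℝ) + 1 = 3 := by norm_num
  rw [h3]
  have hπ : 0 < Real.sqrt Real.pi := Real.sqrt_pos.mpr Real.pi_pos
  have h3' : 0 < Real.sqrt 3 := by positivity
  rw [div_le_div_iff₀ (by positivity) (by positivity)]
  ring_nf
  nlinarith [hπ, h3']

lemma base3 : 2 * Real.sqrt ((3:ℕ) + 1) / (Real.sqrt 3 * Real.sqrt Real.pi) ≤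
    Real.Gamma (1 + ((3:ℕ) : ℝ) / 2) / Real.Gamma ((((3:ℕ) : ℝ) + 1) / 2) := by
  have h1 : (1 : ℝ) + ((3:ℕ) : ℝ) / 2 = 3 / 2 + 1 := by norm_num
  have h2 : ((((3:ℕ)) : ℝ) + 1) / 2 = 2 := by norm_num
  rw [h1, h2, Real.Gamma_two, Real.Gamma_add_one (by norm_num), gamma_three_halves]
  have h3 : ((3:ℕ) : ℝ) + 1 = 4 := by norm_num
  have h4 : Real.sqrt 4 = 2 := by
    rw [show (4:ℝ) = 2 ^ 2 by norm_num, Real.sqrt_sq (by norm_num)]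
  rw [h3, h4]
  have hπ : 0 < Real.sqrt Real.pi := Real.sqrt_pos.mpr Real.pi_pos
  have h3' : 0 < Real.sqrt 3 := by positivity
  have hπ2 : Real.sqrt Real.pi ^ 2 = Real.pi := Real.sq_sqrt Real.pi_pos.le
  have h32 : Real.sqrt 3 ^ 2 = 3 := Real.sq_sqrt (by norm_num)
  -- goal: 2*2/(√3*√π) ≤ (3/2 * (√π/2)) / 1
  have hπlb : 3.1415 < Real.pi := by
    have := Real.pi_gt_d6; linarith
  have hs3 : 1.7 ≤ Real.sqrt 3 := by
    rw [show (1.7:ℝ) = Real.sqrt (1.7^2) by rw [Real.sqrt_sq]; norm_num]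
    exact Real.sqrt_le_sqrt (by norm_num)
  rw [div_le_div_iff₀ (by positivity) (by norm_num)]
  -- 2*2*1 ≤ 3/2*(√π/2)*(√3*√π)
  nlinarith [mul_pos h3' hπ]

lemma lower_bound : ∀ n : ℕ,
    (2 * Real.sqrt ((n + 2 : ℕ) + 1) / (Real.sqrt 3 * Real.sqrt Real.pi) ≤
      Real.Gamma (1 + ((n + 2 : ℕ) : ℝ) / 2) / Real.Gamma ((((n + 2 : ℕ) : ℝ) + 1) / 2)) ∧
    (2 * Real.sqrt ((n + 3 : ℕ) + 1) / (Real.sqrt 3 * Real.sqrt Real.pi) ≤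
      Real.Gamma (1 + ((n + 3 : ℕ) : ℝ) / 2) / Real.Gamma ((((n + 3 : ℕ) : ℝ) + 1) / 2)) := by
  intro n
  induction n with
  | zero => exact ⟨base2, base3⟩
  | succ m ih =>
    refine ⟨by have := ih.2; convert this using 4 <;> push_cast <;> ring, ?_⟩
    have h := lower_step ((m + 2 : ℕ) : ℝ) (by positivity) ih.1
    convert h using 4 <;> push_cast <;> ring

/-- For integers `d ≥ 2`,
`2(d+1)^{1/2}/(3^{1/2}π^{1/2}) ≤ Γ(1+d/2)/Γ((d+1)/2) ≤ (d+1)^{1/2}/2^{1/2}`. -/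
theorem gamma_ratio_bounds (d : ℕ) (hd : 2 ≤ d) :
    2 * Real.sqrt (d + 1) / (Real.sqrt 3 * Real.sqrt Real.pi) ≤
      Real.Gamma (1 + (d : ℝ) / 2) / Real.Gamma (((d : ℝ) + 1) / 2) ∧
    Real.Gamma (1 + (d : ℝ) / 2) / Real.Gamma (((d : ℝ) + 1) / 2) ≤
      Real.sqrt (d + 1) / Real.sqrt 2 := by
  constructor
  · obtain ⟨n, rfl⟩ : ∃ n, d = n + 2 := ⟨d - 2, by omega⟩
    exact (lower_bound n).1
  · exact upper_bound (d : ℝ) (by positivity)
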